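/- arXiv:1701.07412 — 2 statements merged into one kernel-verified Lean document; each statement's English description precedes it below -/
import Mathlib

section
/- Let ψ ∈ (ℂ^d)^{⊗n} be a unit vector, k ∈ {0,…,d−1}², and let B = {|i_k⟩}_{i=0}^{d−1} be an orthonormal basis of ℂ^d with S_{d,k}|i_k⟩ = ω_d^i |i_k⟩. Suppose m_1,…,m_n are integers, each coprime to d, with (S_{d,k}^{m_1}⊗⋯⊗S_{d,k}^{m_n}) ψ = ψ, and suppose that for a given subsystem l the reduced density operator tr_{l̄}(|ψ⟩⟨ψ|) equals (1/d)·1. Then, when the basis B is measured on every subsystem, the mutual information between the outcome at subsystem l and the outcomes at the remaining subsystems satisfies I(B^(l):B^(l̄)| |ψ⟩⟨ψ|) = log₂ d. -/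
open scoped BigOperators ComplexOrder

namespace Paper

noncomputable section

/-- Base-2 Shannon entropy of a finitely indexed probability vector. -/
def shannon {α : Type*} [Fintype α] (p : α → ℝ) : ℝ :=
  ∑ a, -(p a * Real.logb 2 (p a))

/-- Joint outcome type for `n` subsystems of local dimension `d`. -/
abbrev Idx (n d : ℕ) := Fin n → Fin d

/-- The projector `|ψ⟩⟨ψ|`. -/
def proj {α : Type*} (ψ : α → ℂ) : Matrix α α ℂ :=
  Matrix.of fun x y => ψ x * (starRingEnd ℂ) (ψ y)

/-- A density operator: positive semidefinite with trace one. -/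
def IsDensityOp {α : Type*} [Fintype α] [DecidableEq α] (ρ : Matrix α α ℂ) : Prop :=
  ρ.PosSemidef ∧ ρ.trace = 1

/-- `B` is an orthonormal basis of `ℂ^d` (`B i` is the `i`-th basis vector). -/
def IsONB {d : ℕ} (B : Fin d → Fin d → ℂ) : Prop :=
  ∀ i j, (∑ x, (starRingEnd ℂ) (B i x) * B j x) = if i = j then 1 else 0

/-- Two bases of `ℂ^d` are mutually unbiased. -/
def MutUnbiased {d : ℕ} (B B' : Fin d → Fin d → ℂ) : Prop :=
  ∀ i j, ‖∑ x, (starRingEnd ℂ) (B i x) * B' j x‖ ^ 2 = 1 / d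

/-- Joint outcome distribution of measuring the orthonormal basis `B l` on each factor `l`. -/
def jointProb {n d : ℕ} (ρ : Matrix (Idx n d) (Idx n d) ℂ)
    (B : Fin n → Fin d → Fin d → ℂ) (i : Idx n d) : ℝ :=
  (∑ x : Idx n d, ∑ y : Idx n d,
    (∏ l, (starRingEnd ℂ) (B l (i l) (x l))) * ρ x y * (∏ l, B l (i l) (y l))).re

/-- Marginal distribution of subsystem `l`. -/
def margAt {n d : ℕ} (p : Idx n d → ℝ) (l : Fin n) (i : Fin d) : ℝ :=
  ∑ x : Idx n d, if x l = i then p x else 0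

/-- Insert outcome `i` at position `l` into a tuple of outcomes of the other subsystems. -/
def insertAt {n d : ℕ} (l : Fin n) (i : Fin d) (g : {m : Fin n // m ≠ l} → Fin d) : Idx n d :=
  fun m => if h : m = l then i else g ⟨m, h⟩

/-- Marginal distribution of all subsystems except `l`. -/
def margRest {n d : ℕ} (p : Idx n d → ℝ) (l : Fin n)
    (g : {m : Fin n // m ≠ l} → Fin d) : ℝ :=
  ∑ i : Fin d, p (insertAt l i g)

/-- Mutual information `I(B⁽ˡ⁾ : B⁽ˡ̄⁾)` between the outcome at subsystem `l` and the
outcomes at the remaining subsystems, for the joint outcome distribution `p`. -/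
def mutualInfo {n d : ℕ} (p : Idx n d → ℝ) (l : Fin n) : ℝ :=
  shannon (margAt p l) + shannon (margRest p l) - shannon p

/-- The correlation function `C_N(ρ, {B_k^{(l)}})`. -/
def CNval {n d : ℕ} (N : ℕ) (ρ : Matrix (Idx n d) (Idx n d) ℂ)
    (B : Fin N → Fin n → Fin d → Fin d → ℂ) : ℝ :=
  (1 / (n * N)) * ∑ k, ∑ l, mutualInfo (jointProb ρ (B k)) l

/-- `B k l` is, for each subsystem `l`, a family of `N` pairwise mutually unbiased
orthonormal bases (indexed by `k`). -/
def ValidMUBs {n d : ℕ} (N : ℕ) (B : Fin N → Fin n → Fin d → Fin d → ℂ) : Prop :=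
  (∀ k l, IsONB (B k l)) ∧ ∀ l k k', k ≠ k' → MutUnbiased (B k l) (B k' l)

/-- The set of values `C_N(ρ, ·)` over all admissible choices of MUBs;
`𝒞_N(ρ)` is the supremum of this set. -/
def CNvalues {n d : ℕ} (N : ℕ) (ρ : Matrix (Idx n d) (Idx n d) ℂ) : Set ℝ :=
  {x | ∃ B : Fin N → Fin n → Fin d → Fin d → ℂ, ValidMUBs N B ∧ x = CNval N ρ B}

/-- Single-subsystem reduced state `tr_{l̄} ρ`. -/
def reducedAt {n d : ℕ} (ρ : Matrix (Idx n d) (Idx n d) ℂ) (l : Fin n) :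
    Matrix (Fin d) (Fin d) ℂ :=
  Matrix.of fun i j =>
    ∑ g : {m : Fin n // m ≠ l} → Fin d, ρ (insertAt l i g) (insertAt l j g)

/-- `ω_d = exp(2πi/d)`. -/
def ω (d : ℕ) : ℂ := Complex.exp (2 * Real.pi * Complex.I / d)

/-- The generalized Pauli operator `X_d`. -/
def Xmat (d : ℕ) : Matrix (Fin d) (Fin d) ℂ :=
  Matrix.of fun i j => if (i : ℕ) = ((j : ℕ) + 1) % d then 1 else 0

/-- The generalized Pauli operator `Z_d`. -/
def Zmat (d : ℕ) : Matrix (Fin d) (Fin d) ℂ :=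
  Matrix.of fun i j => if i = j then ω d ^ (i : ℕ) else 0

/-- The generalized Pauli operator `S_{d,(k₁,k₂)} = X_d^{k₁} Z_d^{k₂}`. -/
def Smat (d : ℕ) (k : Fin d × Fin d) : Matrix (Fin d) (Fin d) ℂ :=
  Xmat d ^ (k.1 : ℕ) * Zmat d ^ (k.2 : ℕ)

/-- Apply a local operator `A l` to each tensor factor of a multipartite vector `ψ`,
i.e. the vector `(⊗_l A l) ψ`. -/
def applyLocal {n d : ℕ} (A : Fin n → Matrix (Fin d) (Fin d) ℂ) (ψ : Idx n d → ℂ) :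
    Idx n d → ℂ :=
  fun x => ∑ y : Idx n d, (∏ l, A l (x l) (y l)) * ψ y

/-- The computational (standard) basis of `ℂ^d`, the eigenbasis of `Z_d`. -/
def stdBasis (d : ℕ) : Fin d → Fin d → ℂ :=
  fun i x => if x = i then 1 else 0

/-- The Fourier basis of `ℂ^d`, the eigenbasis of `X_d`. -/
def fourierBasis (d : ℕ) : Fin d → Fin d → ℂ :=
  fun i x => (((Real.sqrt d)⁻¹ : ℝ) : ℂ) * ω d ^ ((i : ℕ) * (x : ℕ))

/-- The `n`-fold tensor product `⊗_l A l` as a matrix on the joint system. -/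
def tensorN {n d : ℕ} (A : Fin n → Matrix (Fin d) (Fin d) ℂ) :
    Matrix (Idx n d) (Idx n d) ℂ :=
  Matrix.of fun x y => ∏ l, A l (x l) (y l)

/-- Full separability of an `n`-partite density operator. -/
def FullySep {n d : ℕ} (ρ : Matrix (Idx n d) (Idx n d) ℂ) : Prop :=
  ∃ (J : ℕ) (p : Fin J → ℝ) (σ : Fin J → Fin n → Matrix (Fin d) (Fin d) ℂ),
    (∀ j, 0 ≤ p j) ∧ (∑ j, p j) = 1 ∧ (∀ j l, IsDensityOp (σ j l)) ∧
    ρ = ∑ j, p j • tensorN (σ j)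

/-- generalized GHZ state `(1/√d) ∑_i |i⟩^{⊗n}`. -/
def GHZvec (d n : ℕ) : Idx n d → ℂ :=
  fun x => if ∀ l l', x l = x l' then (((Real.sqrt d)⁻¹ : ℝ) : ℂ) else 0


/-! ### Auxiliary lemmas for the main theorem -/

section Aux

variable {n d : ℕ}

@[simp] lemma insertAt_self (l : Fin n) (i : Fin d) (g : {m : Fin n // m ≠ l} → Fin d) :
    insertAt l i g l = i := by simp [insertAt]

@[simp] lemma insertAt_ne (l : Fin n) (i : Fin d) (g : {m : Fin n // m ≠ l} → Fin d)
    (m : Fin n) (h : m ≠ l) : insertAt l i g m = g ⟨m, h⟩ := by simp [insertAt, h]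

/-- Splitting an `n`-tuple of outcomes into the outcome at `l` and the rest. -/
def splitEquiv (l : Fin n) : Idx n d ≃ Fin d × ({m : Fin n // m ≠ l} → Fin d) where
  toFun x := (x l, fun m => x m.1)
  invFun p := insertAt l p.1 p.2
  left_inv x := by
    funext m
    by_cases h : m = l
    · subst h; simp
    · simp [h]
  right_inv p := by
    ext m
    · simp
    · simp [m.2]

lemma sum_split {M : Type*} [AddCommMonoid M] (l : Fin n) (F : Idx n d → M) :
    ∑ x : Idx n d, F x = ∑ i : Fin d, ∑ g : {m : Fin n // m ≠ l} → Fin d, F (insertAt l i g) := by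
  have h1 : (∑ p : Fin d × ({m : Fin n // m ≠ l} → Fin d), F (insertAt l p.1 p.2))
      = ∑ i : Fin d, ∑ g : {m : Fin n // m ≠ l} → Fin d, F (insertAt l i g) :=
    Fintype.sum_prod_type _
  rw [← h1]
  exact (Equiv.sum_comp (splitEquiv l).symm F).symm

lemma prod_split {M : Type*} [CommMonoid M] (l : Fin n) (F : Fin n → M) :
    ∏ m, F m = F l * ∏ m : {m : Fin n // m ≠ l}, F m.1 := by
  rw [← Finset.mul_prod_erase Finset.univ F (Finset.mem_univ l)]
  congr 1
  exact Finset.prod_subtype _ (fun x => ⟨fun h => (Finset.mem_erase.mp h).1,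
    fun h => Finset.mem_erase.mpr ⟨h, Finset.mem_univ x⟩⟩) _

lemma sum_split_fin {M : Type*} [AddCommMonoid M] (l : Fin n) (F : Fin n → M) :
    ∑ m, F m = F l + ∑ m : {m : Fin n // m ≠ l}, F m.1 := by
  rw [← Finset.add_sum_erase Finset.univ F (Finset.mem_univ l)]
  congr 1
  exact Finset.sum_subtype _ (fun x => ⟨fun h => (Finset.mem_erase.mp h).1,
    fun h => Finset.mem_erase.mpr ⟨h, Finset.mem_univ x⟩⟩) _

/-- Completeness relation for an orthonormal basis. -/
lemma onb_complete {B : Fin d → Fin d → ℂ} (hB : IsONB B) (x y : Fin d) :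
    (∑ j, (starRingEnd ℂ) (B j x) * B j y) = if x = y then 1 else 0 := by
  classical
  let M : Matrix (Fin d) (Fin d) ℂ := Matrix.of fun i x => B i x
  have h1 : M * M.conjTranspose = 1 := by
    ext i j
    simp only [Matrix.mul_apply, Matrix.conjTranspose_apply, Matrix.one_apply, M, Matrix.of_apply]
    have : (∑ x, B i x * star (B j x)) = star (∑ x, (starRingEnd ℂ) (B i x) * B j x) := by
      rw [star_sum]; exact Finset.sum_congr rfl fun x _ => by
        simp [mul_comm]
    rw [this, hB i j]
    split <;> simp
  have h2 : M.conjTranspose * M = 1 := mul_eq_one_comm.mp h1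
  have h3 := congrFun (congrFun h2 x) y
  simpa [Matrix.mul_apply, Matrix.conjTranspose_apply, Matrix.one_apply, M] using h3

/-- Completeness of the tensor-product basis on any factor set. -/
lemma tensor_complete {ι : Type*} [Fintype ι] [DecidableEq ι]
    {B : Fin d → Fin d → ℂ} (hB : IsONB B) (h h' : ι → Fin d) :
    (∑ g : ι → Fin d, (∏ m, (starRingEnd ℂ) (B (g m) (h m))) * (∏ m, B (g m) (h' m)))
      = if h = h' then 1 else 0 := by
  classical
  have e1 : ∀ g : ι → Fin d,
      (∏ m, (starRingEnd ℂ) (B (g m) (h m))) * (∏ m, B (g m) (h' m))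
        = ∏ m, ((starRingEnd ℂ) (B (g m) (h m)) * B (g m) (h' m)) := by
    intro g; rw [← Finset.prod_mul_distrib]
  simp_rw [e1]
  rw [← Fintype.prod_sum (fun m j => (starRingEnd ℂ) (B j (h m)) * B j (h' m))]
  have e2 : ∀ m : ι, (∑ j, (starRingEnd ℂ) (B j (h m)) * B j (h' m))
      = if h m = h' m then 1 else 0 := fun m => onb_complete hB _ _
  simp_rw [e2]
  rw [Fintype.prod_boole]
  congr 1
  simp [funext_iff]

lemma matrix_apply_eq {B : Fin d → Fin d → ℂ} (hB : IsONB B) (A : Matrix (Fin d) (Fin d) ℂ)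
    (a b : Fin d) : A a b = ∑ j, (A.mulVec (B j)) a * (starRingEnd ℂ) (B j b) := by
  classical
  simp only [Matrix.mulVec, dotProduct]
  symm
  calc (∑ j, (∑ c, A a c * B j c) * (starRingEnd ℂ) (B j b))
      = ∑ j, ∑ c, A a c * B j c * (starRingEnd ℂ) (B j b) := by simp_rw [Finset.sum_mul]
    _ = ∑ c, ∑ j, A a c * B j c * (starRingEnd ℂ) (B j b) := Finset.sum_comm ..
    _ = ∑ c, A a c * ∑ j, (starRingEnd ℂ) (B j b) * B j c := by
        refine Finset.sum_congr rfl fun c _ => ?_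
        rw [Finset.mul_sum]; exact Finset.sum_congr rfl fun j _ => by ring
    _ = ∑ c, A a c * (if b = c then 1 else 0) := by
        refine Finset.sum_congr rfl fun c _ => ?_; rw [onb_complete hB]
    _ = A a b := by simp

lemma ext_basis {B : Fin d → Fin d → ℂ} (hB : IsONB B) {A A' : Matrix (Fin d) (Fin d) ℂ}
    (h : ∀ i, A.mulVec (B i) = A'.mulVec (B i)) : A = A' := by
  ext a b
  rw [matrix_apply_eq hB A a b, matrix_apply_eq hB A' a b]
  simp_rw [h]

lemma spectral {B : Fin d → Fin d → ℂ} (hB : IsONB B) (A : Matrix (Fin d) (Fin d) ℂ)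
    (μ : Fin d → ℂ) (hA : ∀ i, A.mulVec (B i) = μ i • B i) (a b : Fin d) :
    A a b = ∑ j, μ j * B j a * (starRingEnd ℂ) (B j b) := by
  rw [matrix_apply_eq hB A a b]
  refine Finset.sum_congr rfl fun j _ => ?_
  rw [hA j]; simp [mul_assoc, mul_comm]

lemma row_eigen {B : Fin d → Fin d → ℂ} (hB : IsONB B) (A : Matrix (Fin d) (Fin d) ℂ)
    (μ : Fin d → ℂ) (hA : ∀ i, A.mulVec (B i) = μ i • B i) (i b : Fin d) :
    (∑ a, (starRingEnd ℂ) (B i a) * A a b) = μ i * (starRingEnd ℂ) (B i b) := by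
  classical
  have e : ∀ a, A a b = ∑ j, μ j * B j a * (starRingEnd ℂ) (B j b) := fun a => spectral hB A μ hA a b
  simp_rw [e, Finset.mul_sum]
  rw [Finset.sum_comm]
  have e2 : ∀ j, (∑ a, (starRingEnd ℂ) (B i a) * (μ j * B j a * (starRingEnd ℂ) (B j b)))
      = (μ j * (starRingEnd ℂ) (B j b)) * ∑ a, (starRingEnd ℂ) (B i a) * B j a := by
    intro j; rw [Finset.mul_sum]; exact Finset.sum_congr rfl fun a _ => by ring
  have hB' : ∀ i' j, (∑ x, (starRingEnd ℂ) (B i' x) * B j x) = if i' = j then 1 else 0 := hB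
  simp_rw [e2, hB']
  simp

lemma pow_eigen {A : Matrix (Fin d) (Fin d) ℂ} {μ : ℂ} {v : Fin d → ℂ}
    (h : A.mulVec v = μ • v) (N : ℕ) : (A ^ N).mulVec v = μ ^ N • v := by
  induction N with
  | zero => simp [Matrix.one_mulVec]
  | succ N ih =>
      rw [pow_succ', pow_succ', ← Matrix.mulVec_mulVec, ih, Matrix.mulVec_smul, h,
        smul_smul, mul_comm]

lemma omega_ne_zero (d : ℕ) : ω d ≠ 0 := Complex.exp_ne_zero _

lemma omega_pow_d (hd : 0 < d) : ω d ^ d = 1 := by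
  have hdc : (d : ℂ) ≠ 0 := Nat.cast_ne_zero.mpr hd.ne'
  rw [ω, ← Complex.exp_nat_mul,
    show ((d:ℂ) * (2 * Real.pi * Complex.I / d)) = 2 * Real.pi * Complex.I from by field_simp]
  exact Complex.exp_two_pi_mul_I

lemma omega_zpow_eq_one_iff (hd : 0 < d) (t : ℤ) : ω d ^ t = 1 ↔ (d : ℤ) ∣ t := by
  have hdc : (d : ℂ) ≠ 0 := Nat.cast_ne_zero.mpr hd.ne'
  have h2pi : (2 * (Real.pi : ℂ) * Complex.I) ≠ 0 := by
    refine mul_ne_zero (mul_ne_zero two_ne_zero ?_) Complex.I_ne_zero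
    exact_mod_cast Real.pi_ne_zero
  rw [ω, ← Complex.exp_int_mul, Complex.exp_eq_one_iff]
  constructor
  · rintro ⟨m, hm⟩
    refine ⟨m, ?_⟩
    have h3 : (t : ℂ) = m * d := by
      have hm2 : (t:ℂ) * (2 * (Real.pi:ℂ) * Complex.I)
          = ((m:ℂ) * (d:ℂ)) * (2 * (Real.pi:ℂ) * Complex.I) := by
        field_simp at hm
        linear_combination (2 * (Real.pi:ℂ) * Complex.I) * hm
      exact mul_right_cancel₀ h2pi hm2
    have h4 : t = m * d := by exact_mod_cast h3
    rw [h4, mul_comm]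
  · rintro ⟨c, rfl⟩
    refine ⟨c, ?_⟩
    push_cast
    field_simp

lemma S_pow_d_eq_one {k : Fin d × Fin d} {B : Fin d → Fin d → ℂ} (hd : 0 < d) (hB : IsONB B)
    (heig : ∀ i : Fin d, (Smat d k).mulVec (B i) = ω d ^ (i : ℕ) • B i) :
    Smat d k ^ d = 1 := by
  refine ext_basis hB fun i => ?_
  rw [pow_eigen (heig i) d, Matrix.one_mulVec, ← pow_mul, mul_comm (i : ℕ) d, pow_mul,
    omega_pow_d hd, one_pow, one_smul]

lemma S_isUnit {k : Fin d × Fin d} {B : Fin d → Fin d → ℂ} (hd : 0 < d) (hB : IsONB B)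
    (heig : ∀ i : Fin d, (Smat d k).mulVec (B i) = ω d ^ (i : ℕ) • B i) :
    IsUnit (Smat d k) := by
  have h1 : Smat d k ^ d = 1 := S_pow_d_eq_one hd hB heig
  have h2 : (Smat d k).det ^ d = 1 := by rw [← Matrix.det_pow, h1, Matrix.det_one]
  have h3 : IsUnit (Smat d k).det :=
    IsUnit.of_mul_eq_one ((Smat d k).det ^ (d - 1))
      (by rw [← pow_succ', Nat.sub_add_cancel hd, h2])
  exact (Matrix.isUnit_iff_isUnit_det _).mpr h3

lemma zpow_eigen {k : Fin d × Fin d} {B : Fin d → Fin d → ℂ} (hd : 0 < d) (hB : IsONB B)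
    (heig : ∀ i : Fin d, (Smat d k).mulVec (B i) = ω d ^ (i : ℕ) • B i) (t : ℤ) (i : Fin d) :
    (Smat d k ^ t).mulVec (B i) = ((ω d ^ (i : ℕ)) ^ t) • B i := by
  cases t with
  | ofNat N =>
      rw [Int.ofNat_eq_coe, zpow_natCast, zpow_natCast]
      exact pow_eigen (heig i) N
  | negSucc N =>
      rw [zpow_negSucc, zpow_negSucc]
      have hP := pow_eigen (heig i) (N + 1)
      have hu : IsUnit (Smat d k ^ (N + 1)).det :=
        (Matrix.isUnit_iff_isUnit_det _).mp ((S_isUnit hd hB heig).pow (N + 1))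
      have hinv : (Smat d k ^ (N + 1))⁻¹ * (Smat d k ^ (N + 1)) = 1 :=
        Matrix.nonsing_inv_mul _ hu
      have hmu : (ω d ^ (i : ℕ)) ^ (N + 1) ≠ 0 :=
        pow_ne_zero _ (pow_ne_zero _ (omega_ne_zero d))
      have hBi : B i = ((ω d ^ (i : ℕ)) ^ (N + 1)) • (Smat d k ^ (N + 1))⁻¹.mulVec (B i) := by
        calc B i = ((Smat d k ^ (N + 1))⁻¹ * Smat d k ^ (N + 1)).mulVec (B i) := by
              rw [hinv, Matrix.one_mulVec]
          _ = (Smat d k ^ (N + 1))⁻¹.mulVec ((Smat d k ^ (N + 1)).mulVec (B i)) := by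
              rw [← Matrix.mulVec_mulVec]
          _ = ((ω d ^ (i : ℕ)) ^ (N + 1)) • (Smat d k ^ (N + 1))⁻¹.mulVec (B i) := by
              rw [hP, Matrix.mulVec_smul]
      calc (Smat d k ^ (N + 1))⁻¹.mulVec (B i)
          = ((ω d ^ (i : ℕ)) ^ (N + 1))⁻¹ •
              (((ω d ^ (i : ℕ)) ^ (N + 1)) • (Smat d k ^ (N + 1))⁻¹.mulVec (B i)) := by
            rw [smul_smul, inv_mul_cancel₀ hmu, one_smul]
        _ = ((ω d ^ (i : ℕ)) ^ (N + 1))⁻¹ • B i := by rw [← hBi]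

lemma omega_zpow_sum {ι : Type*} (s : Finset ι) (f : ι → ℤ) :
    ω d ^ (∑ a ∈ s, f a) = ∏ a ∈ s, ω d ^ f a := by
  classical
  induction s using Finset.cons_induction with
  | empty => simp
  | cons a s ha ih => rw [Finset.sum_cons, Finset.prod_cons, zpow_add₀ (omega_ne_zero d), ih]

/-- The amplitude `⟨B_{i₁} ⊗ ⋯ ⊗ B_{iₙ}, ψ⟩`. -/
def amp (B : Fin d → Fin d → ℂ) (ψ : Idx n d → ℂ) (i : Idx n d) : ℂ :=
  ∑ x : Idx n d, (∏ m, (starRingEnd ℂ) (B (i m) (x m))) * ψ x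

lemma jointProb_proj (B : Fin d → Fin d → ℂ) (ψ : Idx n d → ℂ) (i : Idx n d) :
    jointProb (proj ψ) (fun _ => B) i = Complex.normSq (amp B ψ i) := by
  have key : (∑ x : Idx n d, ∑ y : Idx n d,
      (∏ l, (starRingEnd ℂ) (B (i l) (x l))) * (proj ψ) x y * (∏ l, B (i l) (y l)))
      = amp B ψ i * (starRingEnd ℂ) (amp B ψ i) := by
    rw [amp, map_sum, Finset.sum_mul_sum]
    refine Finset.sum_congr rfl fun x _ => Finset.sum_congr rfl fun y _ => ?_
    simp only [proj, Matrix.of_apply, map_mul, map_prod, Complex.conj_conj]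
    ring
  rw [jointProb, key, Complex.mul_conj, Complex.ofReal_re]

lemma parseval_rest {B : Fin d → Fin d → ℂ} (hB : IsONB B) (l : Fin n)
    (u v : ({m : Fin n // m ≠ l} → Fin d) → ℂ) :
    (∑ g : {m : Fin n // m ≠ l} → Fin d,
      (∑ h, (∏ m', (starRingEnd ℂ) (B (g m') (h m'))) * u h) *
      (starRingEnd ℂ) (∑ h, (∏ m', (starRingEnd ℂ) (B (g m') (h m'))) * v h))
    = ∑ h, u h * (starRingEnd ℂ) (v h) := by
  classical
  calc (∑ g : {m : Fin n // m ≠ l} → Fin d,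
      (∑ h, (∏ m', (starRingEnd ℂ) (B (g m') (h m'))) * u h) *
      (starRingEnd ℂ) (∑ h, (∏ m', (starRingEnd ℂ) (B (g m') (h m'))) * v h))
      = ∑ g : {m : Fin n // m ≠ l} → Fin d, ∑ h, ∑ h',
          ((∏ m', (starRingEnd ℂ) (B (g m') (h m'))) * ∏ m', B (g m') (h' m')) *
            (u h * (starRingEnd ℂ) (v h')) := by
        refine Finset.sum_congr rfl fun g _ => ?_
        rw [map_sum, Finset.sum_mul_sum]
        refine Finset.sum_congr rfl fun h _ => Finset.sum_congr rfl fun h' _ => ?_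
        simp only [map_mul, map_prod, Complex.conj_conj]
        ring
    _ = ∑ h, ∑ h',
          (∑ g : {m : Fin n // m ≠ l} → Fin d,
            (∏ m', (starRingEnd ℂ) (B (g m') (h m'))) * ∏ m', B (g m') (h' m')) *
            (u h * (starRingEnd ℂ) (v h')) := by
        rw [Finset.sum_comm]
        refine Finset.sum_congr rfl fun h _ => ?_
        rw [Finset.sum_comm]
        refine Finset.sum_congr rfl fun h' _ => ?_
        rw [Finset.sum_mul]
    _ = ∑ h, ∑ h', (if h = h' then (1 : ℂ) else 0) * (u h * (starRingEnd ℂ) (v h')) := by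
        refine Finset.sum_congr rfl fun h _ => Finset.sum_congr rfl fun h' _ => ?_
        rw [tensor_complete hB]
    _ = ∑ h, u h * (starRingEnd ℂ) (v h) := by
        refine Finset.sum_congr rfl fun h _ => ?_
        simp [ite_mul]

lemma amp_insert (B : Fin d → Fin d → ℂ) (ψ : Idx n d → ℂ) (l : Fin n) (i : Fin d)
    (g : {m : Fin n // m ≠ l} → Fin d) :
    amp B ψ (insertAt l i g) = ∑ a, (starRingEnd ℂ) (B i a) *
      (∑ h, (∏ m' : {m : Fin n // m ≠ l}, (starRingEnd ℂ) (B (g m') (h m'))) *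
        ψ (insertAt l a h)) := by
  rw [amp, sum_split l]
  refine Finset.sum_congr rfl fun a _ => ?_
  rw [Finset.mul_sum]
  refine Finset.sum_congr rfl fun h _ => ?_
  rw [prod_split l]
  have e : ∀ m' : {m : Fin n // m ≠ l},
      (starRingEnd ℂ) (B (insertAt l i g m'.1) (insertAt l a h m'.1))
        = (starRingEnd ℂ) (B (g m') (h m')) := by
    intro m'
    rw [insertAt_ne _ _ _ _ m'.2, insertAt_ne _ _ _ _ m'.2]
  rw [Finset.prod_congr rfl fun m' _ => e m']
  simp only [insertAt_self]
  ring

lemma margAt_insert (p : Idx n d → ℝ) (l : Fin n) (i : Fin d) :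
    margAt p l i = ∑ g : {m : Fin n // m ≠ l} → Fin d, p (insertAt l i g) := by
  classical
  rw [margAt, sum_split l]
  simp only [insertAt_self]
  have e : ∀ i' : Fin d,
      (∑ g : {m : Fin n // m ≠ l} → Fin d, if i' = i then p (insertAt l i' g) else 0)
        = if i' = i then ∑ g : {m : Fin n // m ≠ l} → Fin d, p (insertAt l i' g) else 0 := by
    intro i'; split <;> simp
  simp_rw [e]
  rw [Finset.sum_ite_eq' Finset.univ i
    (fun i' => ∑ g : {m : Fin n // m ≠ l} → Fin d, p (insertAt l i' g))]
  simp

lemma reducedAt_proj (ψ : Idx n d → ℂ) (l : Fin n) (a b : Fin d) :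
    reducedAt (proj ψ) l a b
      = ∑ h : {m : Fin n // m ≠ l} → Fin d,
          ψ (insertAt l a h) * (starRingEnd ℂ) (ψ (insertAt l b h)) := by
  simp [reducedAt, proj]

lemma margAt_value {B : Fin d → Fin d → ℂ} (hB : IsONB B) (ψ : Idx n d → ℂ) (l : Fin n)
    (hred : reducedAt (proj ψ) l = ((d : ℂ))⁻¹ • 1) (i : Fin d) :
    margAt (jointProb (proj ψ) (fun _ => B)) l i = ((d : ℝ))⁻¹ := by
  classical
  rw [margAt_insert]
  have e1 : ∀ g, jointProb (proj ψ) (fun _ => B) (insertAt l i g)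
      = Complex.normSq (amp B ψ (insertAt l i g)) := fun g => jointProb_proj B ψ _
  simp_rw [e1]
  have key : (∑ g : {m : Fin n // m ≠ l} → Fin d,
      amp B ψ (insertAt l i g) * (starRingEnd ℂ) (amp B ψ (insertAt l i g)))
      = ((d : ℂ))⁻¹ := by
    simp_rw [amp_insert]
    set c : Fin d → ({m : Fin n // m ≠ l} → Fin d) → ℂ :=
      fun a g => ∑ h, (∏ m' : {m : Fin n // m ≠ l}, (starRingEnd ℂ) (B (g m') (h m'))) *
        ψ (insertAt l a h) with hc
    have hpar : ∀ a b : Fin d, (∑ g : {m : Fin n // m ≠ l} → Fin d,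
        c a g * (starRingEnd ℂ) (c b g)) = reducedAt (proj ψ) l a b := by
      intro a b
      rw [parseval_rest hB l, reducedAt_proj]
    calc (∑ g : {m : Fin n // m ≠ l} → Fin d,
          (∑ a, (starRingEnd ℂ) (B i a) * c a g) *
            (starRingEnd ℂ) (∑ b, (starRingEnd ℂ) (B i b) * c b g))
        = ∑ g : {m : Fin n // m ≠ l} → Fin d, ∑ a, ∑ b,
            ((starRingEnd ℂ) (B i a) * B i b) * (c a g * (starRingEnd ℂ) (c b g)) := by
          refine Finset.sum_congr rfl fun g _ => ?_
          rw [map_sum, Finset.sum_mul_sum]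
          refine Finset.sum_congr rfl fun a _ => Finset.sum_congr rfl fun b _ => ?_
          simp only [map_mul, Complex.conj_conj]
          ring
      _ = ∑ a, ∑ g : {m : Fin n // m ≠ l} → Fin d, ∑ b,
            ((starRingEnd ℂ) (B i a) * B i b) * (c a g * (starRingEnd ℂ) (c b g)) :=
          Finset.sum_comm ..
      _ = ∑ a, ∑ b, ∑ g : {m : Fin n // m ≠ l} → Fin d,
            ((starRingEnd ℂ) (B i a) * B i b) * (c a g * (starRingEnd ℂ) (c b g)) :=
          Finset.sum_congr rfl fun a _ => Finset.sum_comm ..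
      _ = ∑ a, ∑ b, ((starRingEnd ℂ) (B i a) * B i b) *
            (∑ g : {m : Fin n // m ≠ l} → Fin d, c a g * (starRingEnd ℂ) (c b g)) := by
          refine Finset.sum_congr rfl fun a _ => Finset.sum_congr rfl fun b _ => ?_
          rw [Finset.mul_sum]
      _ = ∑ a, ∑ b, ((starRingEnd ℂ) (B i a) * B i b) * reducedAt (proj ψ) l a b := by
          simp_rw [hpar]
      _ = ((d : ℂ))⁻¹ := by
          rw [hred]
          have e2 : ∀ a b : Fin d, ((starRingEnd ℂ) (B i a) * B i b) *
              (((d : ℂ))⁻¹ • (1 : Matrix (Fin d) (Fin d) ℂ)) a b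
              = ((d : ℂ))⁻¹ * (if a = b then (starRingEnd ℂ) (B i a) * B i b else 0) := by
            intro a b
            simp only [Matrix.smul_apply, Matrix.one_apply, smul_eq_mul]
            split <;> ring
          simp_rw [e2, ← Finset.mul_sum]
          have e3 : (∑ a, ∑ b, if a = b then (starRingEnd ℂ) (B i a) * B i b else 0)
              = ∑ a, (starRingEnd ℂ) (B i a) * B i a := by
            refine Finset.sum_congr rfl fun a _ => ?_
            simp
          rw [e3, hB i i]
          simp
  have : (∑ g : {m : Fin n // m ≠ l} → Fin d,
      Complex.normSq (amp B ψ (insertAt l i g)) : ℝ)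
      = ((∑ g : {m : Fin n // m ≠ l} → Fin d,
        amp B ψ (insertAt l i g) * (starRingEnd ℂ) (amp B ψ (insertAt l i g))).re) := by
    rw [Complex.re_sum]
    refine Finset.sum_congr rfl fun g _ => ?_
    rw [Complex.mul_conj, Complex.ofReal_re]
  rw [this, key]
  simp

lemma amp_sym {k : Fin d × Fin d} {B : Fin d → Fin d → ℂ} (hd : 0 < d) (hB : IsONB B)
    (heig : ∀ i : Fin d, (Smat d k).mulVec (B i) = ω d ^ (i : ℕ) • B i)
    (m : Fin n → ℤ) (ψ : Idx n d → ℂ)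
    (hsym : applyLocal (fun l => Smat d k ^ (m l)) ψ = ψ) (i : Idx n d) :
    amp B ψ i = ω d ^ (∑ m', ((i m' : ℕ) : ℤ) * m m') * amp B ψ i := by
  classical
  conv_lhs => rw [← hsym]
  have hrow : ∀ (m' : Fin n) (a b : Fin d),
      (∑ x, (starRingEnd ℂ) (B a x) * (Smat d k ^ (m m')) x b)
        = ((ω d ^ (a : ℕ)) ^ (m m')) * (starRingEnd ℂ) (B a b) :=
    fun m' a b => row_eigen hB (Smat d k ^ (m m')) (fun j => (ω d ^ (j : ℕ)) ^ (m m'))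
      (fun j => zpow_eigen hd hB heig (m m') j) a b
  calc (∑ x : Idx n d, (∏ m', (starRingEnd ℂ) (B (i m') (x m'))) *
        (∑ y : Idx n d, (∏ m', (Smat d k ^ (m m')) (x m') (y m')) * ψ y))
      = ∑ x : Idx n d, ∑ y : Idx n d,
          ((∏ m', (starRingEnd ℂ) (B (i m') (x m'))) *
            ∏ m', (Smat d k ^ (m m')) (x m') (y m')) * ψ y := by
        refine Finset.sum_congr rfl fun x _ => ?_
        rw [Finset.mul_sum]
        refine Finset.sum_congr rfl fun y _ => ?_
        ring
    _ = ∑ y : Idx n d, ∑ x : Idx n d,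
          ((∏ m', (starRingEnd ℂ) (B (i m') (x m'))) *
            ∏ m', (Smat d k ^ (m m')) (x m') (y m')) * ψ y := Finset.sum_comm ..
    _ = ∑ y : Idx n d,
          (∑ x : Idx n d, ∏ m', ((starRingEnd ℂ) (B (i m') (x m')) *
            (Smat d k ^ (m m')) (x m') (y m'))) * ψ y := by
        refine Finset.sum_congr rfl fun y _ => ?_
        rw [← Finset.sum_mul]
        congr 1
        refine Finset.sum_congr rfl fun x _ => ?_
        rw [Finset.prod_mul_distrib]
    _ = ∑ y : Idx n d,
          (∏ m', ∑ a, (starRingEnd ℂ) (B (i m') a) * (Smat d k ^ (m m')) a (y m')) * ψ y := by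
        refine Finset.sum_congr rfl fun y _ => ?_
        congr 1
        exact (Fintype.prod_sum fun m' a =>
          (starRingEnd ℂ) (B (i m') a) * (Smat d k ^ (m m')) a (y m')).symm
    _ = ∑ y : Idx n d,
          (∏ m', ((ω d ^ (i m' : ℕ)) ^ (m m')) * (starRingEnd ℂ) (B (i m') (y m'))) * ψ y := by
        refine Finset.sum_congr rfl fun y _ => ?_
        congr 1
        exact Finset.prod_congr rfl fun m' _ => hrow m' (i m') (y m')
    _ = ∑ y : Idx n d, (∏ m', ((ω d ^ (i m' : ℕ)) ^ (m m'))) *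
          ((∏ m', (starRingEnd ℂ) (B (i m') (y m'))) * ψ y) := by
        refine Finset.sum_congr rfl fun y _ => ?_
        rw [Finset.prod_mul_distrib]
        ring
    _ = (∏ m', ((ω d ^ (i m' : ℕ)) ^ (m m'))) * amp B ψ i := by
        rw [← Finset.mul_sum, amp]
    _ = ω d ^ (∑ m', ((i m' : ℕ) : ℤ) * m m') * amp B ψ i := by
        congr 1
        rw [omega_zpow_sum]
        refine Finset.prod_congr rfl fun m' _ => ?_
        rw [← zpow_natCast (ω d) (i m' : ℕ), ← zpow_mul]

lemma support_unique {k : Fin d × Fin d} {B : Fin d → Fin d → ℂ} (hd : 0 < d) (hB : IsONB B)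
    (heig : ∀ i : Fin d, (Smat d k).mulVec (B i) = ω d ^ (i : ℕ) • B i)
    (m : Fin n → ℤ) (hcop : ∀ l, Int.gcd (m l) d = 1) (ψ : Idx n d → ℂ)
    (hsym : applyLocal (fun l => Smat d k ^ (m l)) ψ = ψ) (l : Fin n)
    (g : {m : Fin n // m ≠ l} → Fin d) (i i' : Fin d)
    (h1 : amp B ψ (insertAt l i g) ≠ 0) (h2 : amp B ψ (insertAt l i' g) ≠ 0) : i = i' := by
  have key : ∀ j : Fin d, amp B ψ (insertAt l j g) ≠ 0 →
      (d : ℤ) ∣ ∑ m', (((insertAt l j g) m' : ℕ) : ℤ) * m m' := by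
    intro j hj
    have hs := amp_sym hd hB heig m ψ hsym (insertAt l j g)
    have hfac : (ω d ^ (∑ m', (((insertAt l j g) m' : ℕ) : ℤ) * m m') - 1) *
        amp B ψ (insertAt l j g) = 0 := by linear_combination -hs
    rcases mul_eq_zero.mp hfac with hc | hc
    · exact (omega_zpow_eq_one_iff hd _).mp (by linear_combination hc)
    · exact absurd hc hj
  have d1 := key i h1
  have d2 := key i' h2
  have e : ∀ j : Fin d, (∑ m', (((insertAt l j g) m' : ℕ) : ℤ) * m m')
      = ((j : ℕ) : ℤ) * m l + ∑ m' : {m : Fin n // m ≠ l}, (((g m' : Fin d) : ℕ) : ℤ) * m m'.1 := by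
    intro j
    rw [sum_split_fin l]
    congr 1
    · simp
    · refine Finset.sum_congr rfl fun m' _ => ?_
      rw [insertAt_ne _ _ _ _ m'.2]
  rw [e] at d1 d2
  have hdiff : (d : ℤ) ∣ (((i : ℕ) : ℤ) - ((i' : ℕ) : ℤ)) * m l := by
    have h3 := dvd_sub d1 d2
    have h4 : (((i : ℕ) : ℤ) * m l + ∑ m' : {m : Fin n // m ≠ l}, (((g m' : Fin d) : ℕ) : ℤ) * m m'.1)
        - (((i' : ℕ) : ℤ) * m l + ∑ m' : {m : Fin n // m ≠ l}, (((g m' : Fin d) : ℕ) : ℤ) * m m'.1)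
        = (((i : ℕ) : ℤ) - ((i' : ℕ) : ℤ)) * m l := by ring
    rwa [h4] at h3
  have hcop' : IsCoprime ((d : ℤ)) (m l) := (Int.isCoprime_iff_gcd_eq_one.mpr (hcop l)).symm
  have hdvd : (d : ℤ) ∣ (((i : ℕ) : ℤ) - ((i' : ℕ) : ℤ)) :=
    hcop'.dvd_of_dvd_mul_right hdiff
  have hz : (((i : ℕ) : ℤ) - ((i' : ℕ) : ℤ)) = 0 := by
    refine Int.eq_zero_of_abs_lt_dvd hdvd ?_
    have hi := i.isLt
    have hi' := i'.isLt
    rw [abs_sub_lt_iff]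
    constructor <;> omega
  have : (i : ℕ) = (i' : ℕ) := by omega
  exact Fin.ext this

lemma shannon_collapse {p : Idx n d → ℝ} (l : Fin n)
    (huniq : ∀ g (i i' : Fin d), p (insertAt l i g) ≠ 0 → p (insertAt l i' g) ≠ 0 → i = i') :
    shannon p = shannon (margRest p l) := by
  classical
  rw [shannon, shannon, sum_split l, Finset.sum_comm]
  refine Finset.sum_congr rfl fun g _ => ?_
  rw [margRest]
  by_cases hall : ∀ i : Fin d, p (insertAt l i g) = 0
  · simp [hall]
  · push_neg at hall
    obtain ⟨i₀, hi₀⟩ := hall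
    have hz : ∀ i : Fin d, i ≠ i₀ → p (insertAt l i g) = 0 := by
      intro i hi
      by_contra hne
      exact hi (huniq g i i₀ hne hi₀)
    rw [Finset.sum_eq_single i₀ (fun i _ hi => by rw [hz i hi]; simp) (by simp),
      Finset.sum_eq_single i₀ (fun i _ hi => hz i hi) (by simp)]

lemma shannon_uniform (hd : 0 < d) {q : Fin d → ℝ} (hq : ∀ i, q i = ((d : ℝ))⁻¹) :
    shannon q = Real.logb 2 d := by
  have hd' : (d : ℝ) ≠ 0 := Nat.cast_ne_zero.mpr hd.ne'
  have hlog : Real.logb 2 (((d : ℝ))⁻¹) = -Real.logb 2 d := by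
    rw [Real.logb, Real.logb, Real.log_inv, neg_div]
  rw [shannon]
  simp_rw [hq, hlog]
  rw [Finset.sum_const, Finset.card_univ, Fintype.card_fin, nsmul_eq_mul]
  field_simp

end Aux


/-- For a state with a suitable generalized-Pauli tensor-power symmetry and completely
mixed reduced state at subsystem `l`, measuring the corresponding eigenbasis on every
subsystem yields the maximal mutual information `log₂ d` between `l` and the rest. -/
theorem pauli_symmetry_gives_maximal_mutual_info
    (d n : ℕ) (ψ : Idx n d → ℂ) (hunit : ∑ x, Complex.normSq (ψ x) = 1)
    (k : Fin d × Fin d) (B : Fin d → Fin d → ℂ) (hONB : IsONB B)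
    (heig : ∀ i : Fin d, Matrix.mulVec (Smat d k) (B i) = ω d ^ (i : ℕ) • B i)
    (m : Fin n → ℤ) (hcop : ∀ l, Int.gcd (m l) d = 1)
    (hsym : applyLocal (fun l => Smat d k ^ (m l)) ψ = ψ)
    (l : Fin n) (hred : reducedAt (proj ψ) l = ((d : ℂ))⁻¹ • 1) :
    mutualInfo (jointProb (proj ψ) (fun _ => B)) l = Real.logb 2 d := by
  classical
  have hd : 0 < d := by
    rcases Nat.eq_zero_or_pos d with h0 | h
    · exfalso
      subst h0
      haveI : IsEmpty (Idx n 0) := ⟨fun x => (x l).elim0⟩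
      rw [Finset.univ_eq_empty, Finset.sum_empty] at hunit
      norm_num at hunit
    · exact h
  have hpamp : ∀ x, jointProb (proj ψ) (fun _ => B) x = Complex.normSq (amp B ψ x) :=
    fun x => jointProb_proj B ψ x
  have hmarg : ∀ i, margAt (jointProb (proj ψ) (fun _ => B)) l i = ((d : ℝ))⁻¹ :=
    fun i => margAt_value hONB ψ l hred i
  have huniq : ∀ (g : {m' : Fin n // m' ≠ l} → Fin d) (i i' : Fin d),
      jointProb (proj ψ) (fun _ => B) (insertAt l i g) ≠ 0 →
      jointProb (proj ψ) (fun _ => B) (insertAt l i' g) ≠ 0 → i = i' := by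
    intro g i i' h1 h2
    refine support_unique hd hONB heig m hcop ψ hsym l g i i' ?_ ?_
    · intro hz
      apply h1
      rw [hpamp, hz]
      simp
    · intro hz
      apply h2
      rw [hpamp, hz]
      simp
  rw [mutualInfo, shannon_collapse l huniq, shannon_uniform hd hmarg]
  ring

end
end Paper
end

section
/- For all a, b, c ∈ ℂ, the three-qutrit vector Ψ_{3,3}(a,b,c) = a(|000⟩+|111⟩+|222⟩) + b(|012⟩+|201⟩+|120⟩) + c(|021⟩+|210⟩+|102⟩) ∈ (ℂ³)^{⊗3} satisfies (S_{3,k} ⊗ S_{3,k} ⊗ S_{3,k}) Ψ_{3,3}(a,b,c) = Ψ_{3,3}(a,b,c) for every k ∈ {0,1,2}². -/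
open scoped BigOperators ComplexOrder

namespace Paper

noncomputable section

/-- The three-qutrit states `Ψ_{3,3}(a,b,c)`. -/
def Psi33 (a b c : ℂ) : Idx 3 3 → ℂ :=
  fun x =>
    (if x 1 = x 0 ∧ x 2 = x 0 then a else 0) +
    (if x 1 = x 0 + 1 ∧ x 2 = x 0 + 2 then b else 0) +
    (if x 1 = x 0 + 2 ∧ x 2 = x 0 + 1 then c else 0)

lemma applyLocal_mul {n d : ℕ} (A B : Fin n → Matrix (Fin d) (Fin d) ℂ)
    (ψ : Idx n d → ℂ) :
    applyLocal (fun l => A l * B l) ψ = applyLocal A (applyLocal B ψ) := by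
  funext x
  simp only [applyLocal, Matrix.mul_apply]
  have h : ∀ z : Idx n d,
      (∏ l, ∑ y, A l (x l) y * B l y (z l)) =
        ∑ g : Idx n d, (∏ l, A l (x l) (g l)) * ∏ l, B l (g l) (z l) := by
    intro z
    rw [Finset.prod_univ_sum]
    simp [Fintype.piFinset_univ, Finset.prod_mul_distrib]
  simp only [h, Finset.sum_mul]
  rw [Finset.sum_comm]
  congr 1
  funext g
  rw [Finset.mul_sum]
  congr 1
  funext z
  ring

lemma applyLocal_one {n d : ℕ} (ψ : Idx n d → ℂ) :
    applyLocal (fun _ : Fin n => (1 : Matrix (Fin d) (Fin d) ℂ)) ψ = ψ := by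
  funext x
  rw [applyLocal, Finset.sum_eq_single x]
  · simp [Matrix.one_apply]
  · intro y _ hyx
    obtain ⟨l, hl⟩ := Function.ne_iff.mp (Ne.symm hyx)
    rw [Finset.prod_eq_zero (Finset.mem_univ l)
      (show (1 : Matrix (Fin d) (Fin d) ℂ) (x l) (y l) = 0 by simp [Matrix.one_apply, hl]),
      zero_mul]
  · simp

lemma applyLocal_pow_inv {n d : ℕ} (M : Matrix (Fin d) (Fin d) ℂ) (ψ : Idx n d → ℂ)
    (h : applyLocal (fun _ : Fin n => M) ψ = ψ) (m : ℕ) :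
    applyLocal (fun _ : Fin n => M ^ m) ψ = ψ := by
  induction m with
  | zero => simpa using applyLocal_one ψ
  | succ m ih =>
    have : (fun _ : Fin n => M ^ (m + 1)) = fun _ : Fin n => M ^ m * M := by
      funext _; rw [pow_succ]
    rw [this, applyLocal_mul, h, ih]

lemma omega3_pow_three : ω 3 ^ 3 = 1 := by
  rw [ω, ← Complex.exp_nat_mul]
  have : (3 : ℕ) * (2 * ↑Real.pi * Complex.I / (3 : ℕ)) = 2 * ↑Real.pi * Complex.I := by
    push_cast; ring
  rw [this, Complex.exp_two_pi_mul_I]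

lemma applyLocal_X_Psi33 (a b c : ℂ) :
    applyLocal (fun _ : Fin 3 => Xmat 3) (Psi33 a b c) = Psi33 a b c := by
  funext x
  rw [applyLocal, Finset.sum_eq_single (fun l => x l - 1)]
  · have hmain : ∀ u : Fin 3, Xmat 3 u (u - 1) = 1 := by
      have key : ∀ u : Fin 3, (u : ℕ) = (((u - 1 : Fin 3) : ℕ) + 1) % 3 := by decide
      intro u
      simp [Xmat, key u]
    have hcond1 : ∀ u v : Fin 3, (u - 1 = v - 1) ↔ u = v := by decide
    have hcond2 : ∀ u v w : Fin 3, (u - 1 = v - 1 + w) ↔ u = v + w := by decide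
    simp only [hmain, Finset.prod_const_one, one_mul, Psi33]
    simp only [hcond1, hcond2]
  · intro y _ hyx
    obtain ⟨l, hl⟩ := Function.ne_iff.mp hyx
    have hz : Xmat 3 (x l) (y l) = 0 := by
      have hdec : ∀ u v : Fin 3, v ≠ u - 1 → ¬ ((u : ℕ) = ((v : ℕ) + 1) % 3) := by decide
      have : ¬ ((x l : ℕ) = ((y l : ℕ) + 1) % 3) := hdec (x l) (y l) hl
      simp [Xmat, this]
    rw [Finset.prod_eq_zero (Finset.mem_univ l) hz, zero_mul]
  · simp

lemma applyLocal_Z_Psi33 (a b c : ℂ) :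
    applyLocal (fun _ : Fin 3 => Zmat 3) (Psi33 a b c) = Psi33 a b c := by
  funext x
  rw [applyLocal, Finset.sum_eq_single x]
  · have hmain : ∀ u : Fin 3, Zmat 3 u u = ω 3 ^ (u : ℕ) := by
      intro u; simp [Zmat]
    simp only [hmain, Fin.prod_univ_three, Psi33]
    have hx : x = ![x 0, x 1, x 2] := by
      funext l; fin_cases l <;> rfl
    rw [hx]
    generalize x 0 = i; generalize x 1 = j; generalize x 2 = m
    have h6 : ω 3 ^ 6 = 1 := by
      rw [show (6 : ℕ) = 3 * 2 from rfl, pow_mul, omega3_pow_three, one_pow]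
    have e1 : ω 3 * ω 3 ^ 2 = 1 := by linear_combination omega3_pow_three
    have e2 : ω 3 ^ 2 * ω 3 = 1 := by linear_combination omega3_pow_three
    have e3 : ω 3 * ω 3 * ω 3 = 1 := by linear_combination omega3_pow_three
    fin_cases i <;> fin_cases j <;> fin_cases m <;>
      simp [← pow_add, omega3_pow_three, h6, e1, e2, e3]
  · intro y _ hyx
    obtain ⟨l, hl⟩ := Function.ne_iff.mp (Ne.symm hyx)
    have hz : Zmat 3 (x l) (y l) = 0 := by
      simp [Zmat, hl]
    rw [Finset.prod_eq_zero (Finset.mem_univ l) hz, zero_mul]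
  · simp

/-- `Ψ_{3,3}(a,b,c)` is invariant under `S_{3,k} ⊗ S_{3,k} ⊗ S_{3,k}` for every
`k ∈ {0,1,2}²`. -/
theorem Psi33_pauli_symmetry (a b c : ℂ) (k : Fin 3 × Fin 3) :
    applyLocal (fun _ : Fin 3 => Smat 3 k) (Psi33 a b c) = Psi33 a b c := by
  have : (fun _ : Fin 3 => Smat 3 k) =
      fun _ : Fin 3 => Xmat 3 ^ (k.1 : ℕ) * Zmat 3 ^ (k.2 : ℕ) := rfl
  rw [this, applyLocal_mul,
    applyLocal_pow_inv _ _ (applyLocal_Z_Psi33 a b c),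
    applyLocal_pow_inv _ _ (applyLocal_X_Psi33 a b c)]

end
end Paper
end
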